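/- Let n ≥ 1, let μ_1, …, μ_n and ν_1, …, ν_n be probability measures on ℝ, and let ε_1, …, ε_n ≥ 0. If μ_i((-∞, x]) ≤ (1 + ε_i)·ν_i((-∞, x]) for every x ∈ ℝ and every i, then the n-fold convolutions satisfy (μ_1 ∗ μ_2 ∗ ⋯ ∗ μ_n)((-∞, x]) ≤ (∏_{i=1}^n (1 + ε_i))·(ν_1 ∗ ν_2 ∗ ⋯ ∗ ν_n)((-∞, x]) for every x ∈ ℝ; i.e., per-source excess-mass CDF overbounds compose multiplicatively under convolution of n independent error sources. -/

import Mathlib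

open MeasureTheory
open scoped ENNReal

noncomputable def convList : List (Measure ℝ) → Measure ℝ
  | [] => Measure.dirac 0
  | m :: ms => Measure.conv m (convList ms)

lemma conv_Iic_eq (μ ρ : Measure ℝ) [SFinite μ] [SFinite ρ] (x : ℝ) :
    (μ.conv ρ) (Set.Iic x) = ∫⁻ a, ρ (Set.Iic (x - a)) ∂μ := by
  rw [Measure.conv, Measure.map_apply (by fun_prop) measurableSet_Iic,
    Measure.prod_apply (measurable_add (measurableSet_Iic (a := x)))]
  congr 1
  ext a
  congr 1
  ext b
  simp [le_sub_iff_add_le']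

lemma convList_prob (L : List (Measure ℝ)) (h : ∀ m ∈ L, IsProbabilityMeasure m) :
    IsProbabilityMeasure (convList L) := by
  induction L with
  | nil => simpa [convList] using inferInstanceAs (IsProbabilityMeasure (Measure.dirac (0:ℝ)))
  | cons m ms ih =>
    have h1 : IsProbabilityMeasure m := h m (by simp)
    have h2 : IsProbabilityMeasure (convList ms) := ih fun m hm => h m (by simp [hm])
    simpa [convList] using
      Measure.probabilitymeasure_of_probabilitymeasures_conv m (convList ms)

/-- replace the tail under a fixed head. -/
lemma conv_mono_right (μ ρ ρ' : Measure ℝ) [SFinite μ] [SFinite ρ] [SFinite ρ']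
    (c : ℝ≥0∞) (h : ∀ t, ρ (Set.Iic t) ≤ c * ρ' (Set.Iic t)) (x : ℝ) :
    (μ.conv ρ) (Set.Iic x) ≤ c * (μ.conv ρ') (Set.Iic x) := by
  have hm : Measurable fun a : ℝ => ρ' (Set.Iic (x - a)) :=
    Antitone.measurable fun a b hab => measure_mono (Set.Iic_subset_Iic.2 (by linarith))
  rw [conv_Iic_eq, conv_Iic_eq, ← lintegral_const_mul c hm]
  exact lintegral_mono fun a => h _

/-- replace the head under a fixed tail. -/
lemma conv_mono_left (μ ν ρ : Measure ℝ) [SFinite μ] [SFinite ν] [SFinite ρ]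
    (c : ℝ≥0∞) (h : ∀ t, μ (Set.Iic t) ≤ c * ν (Set.Iic t)) (x : ℝ) :
    (μ.conv ρ) (Set.Iic x) ≤ c * (ν.conv ρ) (Set.Iic x) := by
  rw [Measure.conv_comm μ ρ, Measure.conv_comm ν ρ]
  exact conv_mono_right ρ μ ν c h x

lemma main_ennreal : ∀ (n : ℕ) (μs νs : Fin n → Measure ℝ),
    (∀ i, IsProbabilityMeasure (μs i)) → (∀ i, IsProbabilityMeasure (νs i)) →
    ∀ (c : Fin n → ℝ≥0∞), (∀ i t, (μs i) (Set.Iic t) ≤ c i * (νs i) (Set.Iic t)) →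
    ∀ x : ℝ, (convList (List.ofFn μs)) (Set.Iic x) ≤
      (∏ i, c i) * (convList (List.ofFn νs)) (Set.Iic x) := by
  intro n
  induction n with
  | zero => intro μs νs _ _ c _ x; simp [convList]
  | succ n ih =>
    intro μs νs hμ hν c hc x
    have hμt : IsProbabilityMeasure (convList (List.ofFn (fun i => μs i.succ))) :=
      convList_prob _ (by simp only [List.mem_ofFn]; rintro m ⟨i, rfl⟩; exact hμ _)
    have hνt : IsProbabilityMeasure (convList (List.ofFn (fun i => νs i.succ))) :=
      convList_prob _ (by simp only [List.mem_ofFn]; rintro m ⟨i, rfl⟩; exact hν _)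
    have hμ0 := hμ 0
    have hν0 := hν 0
    rw [List.ofFn_succ, List.ofFn_succ]
    simp only [convList]
    calc ((μs 0).conv (convList (List.ofFn fun i => μs i.succ))) (Set.Iic x)
        ≤ c 0 * ((νs 0).conv (convList (List.ofFn fun i => μs i.succ))) (Set.Iic x) :=
          conv_mono_left _ _ _ _ (hc 0) x
      _ ≤ c 0 * ((∏ i : Fin n, c i.succ) *
            ((νs 0).conv (convList (List.ofFn fun i => νs i.succ))) (Set.Iic x)) := by
          gcongr
          exact conv_mono_right _ _ _ _
            (ih (fun i => μs i.succ) (fun i => νs i.succ) (fun i => hμ _) (fun i => hν _)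
              (fun i => c i.succ) (fun i t => hc _ _)) x
      _ = (∏ i, c i) * ((νs 0).conv (convList (List.ofFn fun i => νs i.succ))) (Set.Iic x) := by
          rw [Fin.prod_univ_succ, mul_assoc]

theorem excess_mass_overbounds_compose_under_convolution
    (n : ℕ) (hn : 1 ≤ n)
    (μs νs : Fin n → Measure ℝ)
    (hμ : ∀ i, IsProbabilityMeasure (μs i))
    (hν : ∀ i, IsProbabilityMeasure (νs i))
    (ε : Fin n → ℝ) (hε : ∀ i, 0 ≤ ε i)
    (hbound : ∀ i, ∀ x : ℝ,
      ((μs i) (Set.Iic x)).toReal ≤ (1 + ε i) * ((νs i) (Set.Iic x)).toReal) :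
    ∀ x : ℝ,
      ((convList (List.ofFn μs)) (Set.Iic x)).toReal ≤
        (∏ i, (1 + ε i)) * ((convList (List.ofFn νs)) (Set.Iic x)).toReal := by
  intro x
  have h1 : ∀ i, 0 ≤ 1 + ε i := fun i => by linarith [hε i]
  have key := main_ennreal n μs νs hμ hν (fun i => ENNReal.ofReal (1 + ε i))
    (fun i t => by
      have := hμ i; have := hν i
      rw [← ENNReal.ofReal_toReal (measure_ne_top (μs i) _),
        ← ENNReal.ofReal_toReal (measure_ne_top (νs i) _), ← ENNReal.ofReal_mul (h1 i)]
      exact ENNReal.ofReal_le_ofReal (hbound i t)) x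
  have hprod : (∏ i, ENNReal.ofReal (1 + ε i)) = ENNReal.ofReal (∏ i, (1 + ε i)) := by
    rw [ENNReal.ofReal_prod_of_nonneg (fun i _ => h1 i)]
  rw [hprod] at key
  have hνp : IsProbabilityMeasure (convList (List.ofFn νs)) :=
    convList_prob _ (by simp only [List.mem_ofFn]; rintro m ⟨i, rfl⟩; exact hν _)
  have hfin : ENNReal.ofReal (∏ i, (1 + ε i)) * (convList (List.ofFn νs)) (Set.Iic x) ≠ ⊤ :=
    ENNReal.mul_ne_top ENNReal.ofReal_ne_top (measure_ne_top _ _)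
  calc ((convList (List.ofFn μs)) (Set.Iic x)).toReal
      ≤ (ENNReal.ofReal (∏ i, (1 + ε i)) * (convList (List.ofFn νs)) (Set.Iic x)).toReal :=
        ENNReal.toReal_mono hfin key
    _ = (∏ i, (1 + ε i)) * ((convList (List.ofFn νs)) (Set.Iic x)).toReal := by
        rw [ENNReal.toReal_mul, ENNReal.toReal_ofReal (Finset.prod_nonneg fun i _ => h1 i)]
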